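/- Let f, g be orientation-preserving homeomorphisms of ℝ with f∘g = g⁻¹∘f, let (u,v) be a bounded maximal open interval of ℝ ∖ Fix(g) with g(x) > x on (u,v), and suppose f((u,v)) = (u,v). Then u = v, a contradiction; hence no such configuration exists. -/
import Mathlib


/-- Let `f, g` be orientation-preserving homeomorphisms of `ℝ` with `f ∘ g = g⁻¹ ∘ f`, and
let `(u, v)` be a bounded maximal open interval of `ℝ ∖ Fix(g)` with `g x > x` on `(u, v)`.
Then `f((u, v)) = (u, v)` is impossible. -/
theorem stmt_17 (f g : ℝ ≃o ℝ) (hrel : ∀ x : ℝ, f (g x) = g⁻¹ (f x))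
    (u v : ℝ) (huv : u < v) (hu : g u = u) (hv : g v = v)
    (hpush : ∀ x ∈ Set.Ioo u v, x < g x)
    (hf : f '' Set.Ioo u v = Set.Ioo u v) : False := by
  set x : ℝ := (u + v) / 2 with hxdef
  have hx : x ∈ Set.Ioo u v := ⟨by simp [hxdef]; linarith, by simp [hxdef]; linarith⟩
  have hfx : f x ∈ Set.Ioo u v := hf ▸ Set.mem_image_of_mem f hx
  have h1 : f x < f (g x) := f.strictMono (hpush x hx)
  have h2 : g⁻¹ (f x) < f x := by
    have h3 : f x < g (f x) := hpush (f x) hfx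
    have h4 : g⁻¹ (f x) < g⁻¹ (g (f x)) := g⁻¹.strictMono h3
    have h5 : g⁻¹ (g (f x)) = f x := by
      show (g⁻¹ * g) (f x) = f x
      simp
    linarith [h4, h5.symm ▸ h4]
  rw [hrel x] at h1
  linarith
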